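/- arXiv:math/0310436 — 4 statements merged into one kernel-verified Lean document; each statement's English description precedes it below -/
import Mathlib

section
/- Every positive integer solution (k, ℓ, m, d) with k ≤ ℓ ≤ m, 1/k + 1/ℓ + 1/m < 1, m ≤ d, and d(1 − 1/k − 1/ℓ − 1/m) ≤ 1 − 3/m satisfies (k, ℓ) ∈ {(2,3), (2,4)} and m ≤ 10. -/
set_option maxHeartbeats 1000000 in
/-- Every positive integer solution (k,ℓ,m,d) with k ≤ ℓ ≤ m ≤ d,
    1/k + 1/ℓ + 1/m < 1 and d(1 - 1/k - 1/ℓ - 1/m) ≤ 1 - 3/m satisfies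
    (k,ℓ) ∈ {(2,3),(2,4)} and m ≤ 10. -/
theorem stmt_8 (k ℓ m d : ℕ) (hk : 0 < k) (hkl : k ≤ ℓ) (hlm : ℓ ≤ m) (hmd : m ≤ d)
    (hsum : (1 : ℚ) / k + 1 / ℓ + 1 / m < 1)
    (hineq : (d : ℚ) * (1 - 1 / k - 1 / ℓ - 1 / m) ≤ 1 - 3 / m) :
    ((k = 2 ∧ ℓ = 3) ∨ (k = 2 ∧ ℓ = 4)) ∧ m ≤ 10 := by
  have hl : 0 < ℓ := lt_of_lt_of_le hk hkl
  have hm : 0 < m := lt_of_lt_of_le hl hlm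
  have hkQ : (1:ℚ) ≤ k := by exact_mod_cast hk
  have hlQ : (1:ℚ) ≤ ℓ := by exact_mod_cast hl
  have hmQ : (1:ℚ) ≤ m := by exact_mod_cast hm
  have hklQ : (k:ℚ) ≤ ℓ := by exact_mod_cast hkl
  have hlmQ : (ℓ:ℚ) ≤ m := by exact_mod_cast hlm
  have hmdQ : (m:ℚ) ≤ d := by exact_mod_cast hmd
  have hk0 : (0:ℚ) < k := by linarith
  have hl0 : (0:ℚ) < ℓ := by linarith
  have hm0 : (0:ℚ) < m := by linarith
  have hik : (k:ℚ) * (1/k) = 1 := by field_simp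
  have hil : (ℓ:ℚ) * (1/ℓ) = 1 := by field_simp
  have him : (m:ℚ) * (1/m) = 1 := by field_simp
  have hε : (0:ℚ) < 1 - 1/k - 1/ℓ - 1/m := by linarith
  have key : (m:ℚ) * (1 - 1/k - 1/ℓ - 1/m) ≤ 1 - 3/m := by
    nlinarith [mul_le_mul_of_nonneg_right hmdQ hε.le]
  have key2 : (m:ℚ)/2 + m/2 - m*(1/k) - m*(1/ℓ) ≤ 2 - 3*(1/m) := by
    have e1 : (m:ℚ) * (1 - 1/k - 1/ℓ - 1/m) = m/2 + m/2 - m*(1/k) - m*(1/ℓ) - m*(1/m) := by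
      ring
    have e2 : (3:ℚ)/m = 3 * (1/m) := by ring
    rw [e1, him, e2] at key
    linarith
  -- k ≥ 2
  have hk2 : 2 ≤ k := by
    by_contra h
    interval_cases k
    have hbl : (0:ℚ) < 1/ℓ := by positivity
    have hbm : (0:ℚ) < 1/m := by positivity
    norm_num at hsum
    linarith
  -- k ≤ 2
  have hk2' : k ≤ 2 := by
    by_contra h
    push_neg at h
    have h3k : (3:ℚ) ≤ k := by exact_mod_cast h
    have h3l : (3:ℚ) ≤ ℓ := by linarith
    have h3m' : (3:ℚ) ≤ m := by linarith
    have hak : (1:ℚ)/k ≤ 1/3 := by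
      rw [div_le_div_iff₀ hk0 (by norm_num)]; linarith
    have hal : (1:ℚ)/ℓ ≤ 1/3 := by
      rw [div_le_div_iff₀ hl0 (by norm_num)]; linarith
    have hm3 : (m:ℚ) ≤ 3 := by
      nlinarith [sq_nonneg ((m:ℚ) - 3), mul_pos hm0 hm0]
    have hmeq : m = 3 := by
      have : (m:ℚ) = 3 := le_antisymm hm3 h3m'
      exact_mod_cast this
    have hkeq : k = 3 := by omega
    have hleq : ℓ = 3 := by omega
    rw [hkeq, hleq, hmeq] at hsum
    norm_num at hsum
  have hkeq : k = 2 := le_antisymm hk2' hk2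
  subst hkeq
  have hak : (1:ℚ)/2 = 1/(2:ℕ) := by push_cast; ring
  -- ℓ ≥ 3
  have hl3 : 3 ≤ ℓ := by
    by_contra h
    interval_cases ℓ
    · norm_num at hsum
      have : (0:ℚ) < 1/m := by positivity
      linarith
  -- ℓ ≤ 4
  have hl4 : ℓ ≤ 4 := by
    by_contra h
    push_neg at h
    have h5l : (5:ℚ) ≤ ℓ := by exact_mod_cast h
    have h5m : (5:ℚ) ≤ m := by linarith
    have hal : (1:ℚ)/ℓ ≤ 1/5 := by
      rw [div_le_div_iff₀ hl0 (by norm_num)]; linarith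
    have hmb : (m:ℚ) * (1/ℓ) ≤ m * (1/5) := mul_le_mul_of_nonneg_left hal hm0.le
    have hma : (m:ℚ) * (1/(2:ℕ)) = m/2 := by push_cast; ring
    have key3 : (m:ℚ)/2 - m*(1/5) ≤ 2 - 3*(1/m) := by
      rw [hma] at key2; linarith
    have key4 : (m:ℚ)*(m/2 - m*(1/5)) ≤ m*(2 - 3*(1/m)) :=
      mul_le_mul_of_nonneg_left key3 hm0.le
    have e3 : (m:ℚ)*(2 - 3*(1/m)) = 2*m - 3*(m*(1/m)) := by ring
    rw [e3, him] at key4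
    have e4 : (m:ℚ)*(m/2 - m*(1/5)) = 3/10*(m*m) := by ring
    rw [e4] at key4
    have hs : (0:ℚ) ≤ ((m:ℚ)-5)*((m:ℚ)-5) := mul_self_nonneg _
    have hs' : ((m:ℚ)-5)*((m:ℚ)-5) = m*m - 10*m + 25 := by ring
    rw [hs'] at hs
    linarith
  -- m ≤ 10
  have hm10 : m ≤ 10 := by
    by_contra h
    push_neg at h
    have h11 : (11:ℚ) ≤ m := by exact_mod_cast h
    have h3l : (3:ℚ) ≤ ℓ := by exact_mod_cast hl3
    have hal : (1:ℚ)/ℓ ≤ 1/3 := by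
      rw [div_le_div_iff₀ hl0 (by norm_num)]; linarith
    have hmb : (m:ℚ) * (1/ℓ) ≤ m * (1/3) := mul_le_mul_of_nonneg_left hal hm0.le
    have hma : (m:ℚ) * (1/(2:ℕ)) = m/2 := by push_cast; ring
    have key3 : (m:ℚ)/2 - m*(1/3) ≤ 2 - 3*(1/m) := by
      rw [hma] at key2; linarith
    have key4 : (m:ℚ)*(m/2 - m*(1/3)) ≤ m*(2 - 3*(1/m)) :=
      mul_le_mul_of_nonneg_left key3 hm0.le
    have e3 : (m:ℚ)*(2 - 3*(1/m)) = 2*m - 3*(m*(1/m)) := by ring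
    rw [e3, him] at key4
    have e4 : (m:ℚ)*(m/2 - m*(1/3)) = 1/6*(m*m) := by ring
    rw [e4] at key4
    have hs : (0:ℚ) ≤ ((m:ℚ)-11)*((m:ℚ)-11) := mul_self_nonneg _
    have hs' : ((m:ℚ)-11)*((m:ℚ)-11) = m*m - 22*m + 121 := by ring
    rw [hs'] at hs
    linarith
  refine ⟨?_, hm10⟩
  interval_cases ℓ
  · exact Or.inl ⟨rfl, rfl⟩
  · exact Or.inr ⟨rfl, rfl⟩
end

section
/- Let ω ∈ ℂ satisfy ω² + ω + 1 = 0 and define φ₁(x) = x(x−1)(27x² − (723+1392ω)x − 496+696ω)³ / (64((6ω+3)x − 8 − 3ω)⁷). Then the rational function φ₁ has degree 8, i.e., the numerator has degree 8 in x and the numerator and denominator share no common root. -/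
open Polynomial

/-- The covering φ₁ for the degree-8 transformation (1/2,1/3,1/7) → (1/3,1/3,1/7):
    its numerator has degree 8 and shares no root with its denominator. -/
theorem stmt_9 (ω : ℂ) (hω : ω ^ 2 + ω + 1 = 0)
    (P Q : Polynomial ℂ)
    (hP : P = X * (X - 1) *
      (C 27 * X ^ 2 - C (723 + 1392 * ω) * X + C (-496 + 696 * ω)) ^ 3)
    (hQ : Q = C 64 * (C (6 * ω + 3) * X - C (8 + 3 * ω)) ^ 7) :
    P.natDegree = 8 ∧ ∀ z : ℂ, ¬(P.IsRoot z ∧ Q.IsRoot z) := by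
  constructor
  · subst hP
    compute_degree!
  · rintro z ⟨hPz, hQz⟩
    subst hP hQ
    simp only [IsRoot, eval_mul, eval_pow, eval_sub, eval_add, eval_C, eval_X, eval_one,
      mul_eq_zero, pow_eq_zero_iff, ne_eq, OfNat.ofNat_ne_zero, not_false_eq_true] at hPz hQz
    have hl : (6 * ω + 3) * z - (8 + 3 * ω) = 0 := by
      rcases hQz with h | h
      · norm_num at h
      · exact h
    rcases hPz with (hz0 | hz1) | hq
    · subst hz0
      have : (49 : ℂ) = 0 := by
        linear_combination 9 * hω + (3 * ω - 5) * hl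
      norm_num at this
    · have hz1' : z = 1 := by linear_combination hz1
      subst hz1'
      have : (49 : ℂ) = 0 := by
        linear_combination 9 * hω - (3 * ω + 8) * hl
      norm_num at this
    · have : (64827 : ℂ) = 0 := by
        linear_combination (6 * ω + 3) ^ 2 * hq -
          (27 * ((6 * ω + 3) * z + 8 + 3 * ω) - (723 + 1392 * ω) * (6 * ω + 3)) * hl +
          84915 * hω
      norm_num at this
end

section
/- Define φ₃(x) = −x²(x−1)(49x−81)⁷ / (4(16807x³ − 9261x² − 13851x + 6561)³). Then the numerator and denominator of φ₃ are coprime polynomials over ℚ and both have degree-10 numerator and degree-9 denominator; in particular φ₃ defines a degree 10 morphism ℙ¹ → ℙ¹. -/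
open Polynomial

lemma aux_coprime_X_sub_C {a : ℚ} {Q : Polynomial ℚ} (h : Q.eval a ≠ 0) :
    IsCoprime (X - C a) Q := by
  by_contra hc
  exact h (Polynomial.dvd_iff_isRoot.mp
    ((Polynomial.irreducible_X_sub_C a).dvd_iff_not_isCoprime.mpr hc))

/-- The covering φ₃ = -x²(x-1)(49x-81)⁷ / (4(16807x³-9261x²-13851x+6561)³) has
    coprime numerator (degree 10) and denominator (degree 9), hence defines a
    degree-10 morphism ℙ¹ → ℙ¹. -/
theorem stmt_11 (P Q : Polynomial ℚ)
    (hP : P = -(X ^ 2 * (X - 1) * (C 49 * X - C 81) ^ 7))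
    (hQ : Q = C 4 * (C 16807 * X ^ 3 - C 9261 * X ^ 2 - C 13851 * X + C 6561) ^ 3) :
    IsCoprime P Q ∧ P.natDegree = 10 ∧ Q.natDegree = 9 ∧
      max P.natDegree Q.natDegree = 10 := by
  have hlin : (C 49 * X - C 81 : Polynomial ℚ).natDegree = 1 := by
    rw [show (C 49 * X - C 81 : Polynomial ℚ) = C 49 * X + C (-81) by
      simp [sub_eq_add_neg]]
    exact natDegree_linear (by norm_num)
  have hlin0 : (C 49 * X - C 81 : Polynomial ℚ) ≠ 0 := fun h => by simp [h] at hlin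
  have hX1 : (X - 1 : Polynomial ℚ) ≠ 0 := by
    simpa using X_sub_C_ne_zero (1 : ℚ)
  have hPd : P.natDegree = 10 := by
    subst hP
    rw [natDegree_neg,
      natDegree_mul (mul_ne_zero (pow_ne_zero _ X_ne_zero) hX1) (pow_ne_zero _ hlin0),
      natDegree_mul (pow_ne_zero _ X_ne_zero) hX1, natDegree_pow, natDegree_pow, hlin,
      natDegree_X]
    have h1d : (X - 1 : Polynomial ℚ).natDegree = 1 := by
      simpa using natDegree_X_sub_C (1 : ℚ)
    rw [h1d]
  have hQd : Q.natDegree = 9 := by subst hQ; compute_degree!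
  refine ⟨?_, hPd, hQd, by rw [hPd, hQd]; rfl⟩
  have h0 : IsCoprime (X : Polynomial ℚ) Q := by
    have := aux_coprime_X_sub_C (a := (0 : ℚ)) (Q := Q) (by subst hQ; simp)
    simpa using this
  have h1 : IsCoprime (X - 1 : Polynomial ℚ) Q := by
    have := aux_coprime_X_sub_C (a := (1 : ℚ)) (Q := Q) (by subst hQ; simp; norm_num)
    simpa using this
  have h2 : IsCoprime (C 49 * X - C 81 : Polynomial ℚ) Q := by
    have heq : (C 49 * X - C 81 : Polynomial ℚ) = C 49 * (X - C (81/49)) := by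
      rw [mul_sub, ← C_mul]
      norm_num
    have hc : IsCoprime (X - C (81/49) : Polynomial ℚ) Q :=
      aux_coprime_X_sub_C (by subst hQ; simp; norm_num)
    rw [heq, isCoprime_mul_unit_left_left (isUnit_C.mpr (by norm_num : IsUnit (49 : ℚ)))]
    exact hc
  rw [hP]
  exact (((h0.pow_left.mul_left h1).mul_left h2.pow_left)).neg_left
end

section
/- The cubic transformation identity ₂F₁(a, (1−a)/3; (4a+5)/6; x) = (1 − 4x)^{−a} · ₂F₁(a/3, (a+1)/3; (4a+5)/6; 27x/(4x−1)³) holds for all complex a with (4a+5)/6 not a nonpositive integer and all x in a sufficiently small neighborhood of 0. -/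
open Polynomial

/-- The Gauss hypergeometric series ₂F₁(A,B;C;x). -/
noncomputable def hyp (A B C x : ℂ) : ℂ :=
  ∑' n : ℕ, (ascPochhammer ℂ n).eval A * (ascPochhammer ℂ n).eval B /
    ((ascPochhammer ℂ n).eval C * (n.factorial : ℂ)) * x ^ n

noncomputable section St18


/-- hypergeometric coefficients -/
def st18cf (A B C : ℂ) (n : ℕ) : ℂ :=
  (ascPochhammer ℂ n).eval A * (ascPochhammer ℂ n).eval B /
    ((ascPochhammer ℂ n).eval C * (n.factorial : ℂ))

def st18S (e : ℕ → ℂ) (x : ℂ) : ℂ := ∑' n : ℕ, e n * x ^ n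

def st18sh (e : ℕ → ℂ) (n : ℕ) : ℂ := ((n : ℂ) + 1) * e (n + 1)

lemma st18_poch_ne {C : ℂ} (hC : ∀ n : ℕ, (n : ℂ) + C ≠ 0) (n : ℕ) :
    (ascPochhammer ℂ n).eval C ≠ 0 := by
  induction n with
  | zero => simp
  | succ m ih =>
    rw [ascPochhammer_succ_right]
    simp only [eval_mul, eval_add, eval_X, eval_natCast]
    exact mul_ne_zero ih (by simpa [add_comm] using hC m)

lemma st18_poch_upper (A : ℂ) (n : ℕ) :
    ‖(ascPochhammer ℂ n).eval A‖ ≤ (n.factorial : ℝ) * (1 + ‖A‖) ^ n := by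
  induction n with
  | zero => simp
  | succ m ih =>
    rw [ascPochhammer_succ_right]
    simp only [eval_mul, eval_add, eval_X, eval_natCast, norm_mul]
    have h1 : ‖A + (m : ℂ)‖ ≤ ((m : ℝ) + 1) * (1 + ‖A‖) := by
      calc ‖A + (m : ℂ)‖ ≤ ‖A‖ + (m : ℝ) := by
            simpa using norm_add_le A (m : ℂ)
        _ ≤ ((m : ℝ) + 1) * (1 + ‖A‖) := by nlinarith [norm_nonneg A, Nat.cast_nonneg (α := ℝ) m]
    calc ‖(ascPochhammer ℂ m).eval A‖ * ‖A + (m : ℂ)‖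
        ≤ ((m.factorial : ℝ) * (1 + ‖A‖) ^ m) * (((m : ℝ) + 1) * (1 + ‖A‖)) := by
          apply mul_le_mul ih h1 (norm_nonneg _)
          positivity
      _ = ((m + 1).factorial : ℝ) * (1 + ‖A‖) ^ (m + 1) := by
          rw [Nat.factorial_succ]; push_cast; ring
  
lemma st18_poch_lower {C : ℂ} (hC : ∀ n : ℕ, (n : ℂ) + C ≠ 0) :
    ∃ m : ℝ, 0 < m ∧ ∀ n : ℕ, (n.factorial : ℝ) * m ^ n ≤ ‖(ascPochhammer ℂ n).eval C‖ := by
  -- first a pointwise bound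
  have key : ∃ m : ℝ, 0 < m ∧ ∀ k : ℕ, ((k : ℝ) + 1) * m ≤ ‖(k : ℂ) + C‖ := by
    set N : ℕ := ⌈2 * ‖C‖⌉₊ + 1 with hN
    have hNne : (Finset.range N).Nonempty := ⟨0, by simp [hN]⟩
    set m₀ : ℝ := (Finset.range N).inf' hNne (fun k => ‖(k : ℂ) + C‖ / ((k : ℝ) + 1)) with hm₀
    have hm₀pos : 0 < m₀ := by
      rw [hm₀, Finset.lt_inf'_iff]
      intro k _
      have : (0:ℝ) < ‖(k : ℂ) + C‖ := norm_pos_iff.mpr (hC k)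
      positivity
    refine ⟨min m₀ (1/2), by positivity, fun k => ?_⟩
    by_cases hk : k < N
    · have h1 : m₀ ≤ ‖(k : ℂ) + C‖ / ((k : ℝ) + 1) :=
        Finset.inf'_le _ (Finset.mem_range.mpr hk)
      have h2 : ((k : ℝ) + 1) * m₀ ≤ ‖(k : ℂ) + C‖ := by
        rw [mul_comm]
        exact (le_div_iff₀ (by positivity)).mp h1
      have : ((k : ℝ) + 1) * min m₀ (1/2) ≤ ((k : ℝ) + 1) * m₀ := by
        apply mul_le_mul_of_nonneg_left (min_le_left _ _) (by positivity)
      linarith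
    · push_neg at hk
      have hkC : 2 * ‖C‖ + 1 ≤ (k : ℝ) := by
        have h1 : 2 * ‖C‖ ≤ (⌈2 * ‖C‖⌉₊ : ℝ) := Nat.le_ceil _
        have h2 : (N : ℝ) ≤ (k : ℝ) := by exact_mod_cast hk
        have : (N : ℝ) = (⌈2 * ‖C‖⌉₊ : ℝ) + 1 := by rw [hN]; push_cast; ring
        linarith
      have h1 : (k : ℝ) - ‖C‖ ≤ ‖(k : ℂ) + C‖ := by
        have h := norm_sub_norm_le ((k : ℂ)) (-C)
        simp only [sub_neg_eq_add, norm_neg] at h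
        have hkn : ‖(k : ℂ)‖ = (k : ℝ) := by simp
        linarith
      have h2 : ((k : ℝ) + 1) * min m₀ (1/2) ≤ ((k : ℝ) + 1) * (1/2) := by
        apply mul_le_mul_of_nonneg_left (min_le_right _ _) (by positivity)
      have : ((k : ℝ) + 1) * (1/2) ≤ (k : ℝ) - ‖C‖ := by linarith
      linarith
  obtain ⟨m, hm, hmk⟩ := key
  refine ⟨m, hm, fun n => ?_⟩
  induction n with
  | zero => simp
  | succ k ih =>
    rw [ascPochhammer_succ_right]
    simp only [eval_mul, eval_add, eval_X, eval_natCast, norm_mul]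
    calc ((k+1).factorial : ℝ) * m ^ (k+1)
        = ((k.factorial : ℝ) * m ^ k) * (((k : ℝ) + 1) * m) := by
          rw [Nat.factorial_succ]; push_cast; ring
      _ ≤ ‖(ascPochhammer ℂ k).eval C‖ * ‖C + (k : ℂ)‖ := by
          apply mul_le_mul ih ?_ (by positivity) (norm_nonneg _)
          rw [add_comm C]
          exact hmk k

lemma st18_cf_bound (A B : ℂ) {C : ℂ} (hC : ∀ n : ℕ, (n : ℂ) + C ≠ 0) :
    ∃ R : ℝ, 1 ≤ R ∧ ∀ n, ‖st18cf A B C n‖ ≤ R ^ n := by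
  obtain ⟨m, hm, hml⟩ := st18_poch_lower hC
  refine ⟨max 1 ((1 + ‖A‖) * (1 + ‖B‖) / m), le_max_left _ _, fun n => ?_⟩
  have hfac : (0:ℝ) < (n.factorial : ℝ) := by exact_mod_cast n.factorial_pos
  have hden : (0:ℝ) < (n.factorial : ℝ) * m ^ n := by positivity
  have hpc : (0:ℝ) < ‖(ascPochhammer ℂ n).eval C‖ :=
    norm_pos_iff.mpr (st18_poch_ne hC n)
  have h1 : ‖st18cf A B C n‖ =
      ‖(ascPochhammer ℂ n).eval A‖ * ‖(ascPochhammer ℂ n).eval B‖ /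
        (‖(ascPochhammer ℂ n).eval C‖ * (n.factorial : ℝ)) := by
    rw [st18cf, norm_div, norm_mul, norm_mul]
    congr 2
    simp
  rw [h1]
  have h2 : ‖(ascPochhammer ℂ n).eval A‖ * ‖(ascPochhammer ℂ n).eval B‖ ≤
      ((n.factorial : ℝ) * (1 + ‖A‖) ^ n) * ((n.factorial : ℝ) * (1 + ‖B‖) ^ n) :=
    mul_le_mul (st18_poch_upper A n) (st18_poch_upper B n) (norm_nonneg _) (by positivity)
  have h3 : ((n.factorial : ℝ) * m ^ n) * (n.factorial : ℝ) ≤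
      ‖(ascPochhammer ℂ n).eval C‖ * (n.factorial : ℝ) :=
    mul_le_mul_of_nonneg_right (hml n) (le_of_lt hfac)
  calc ‖(ascPochhammer ℂ n).eval A‖ * ‖(ascPochhammer ℂ n).eval B‖ /
        (‖(ascPochhammer ℂ n).eval C‖ * (n.factorial : ℝ))
      ≤ ((n.factorial : ℝ) * (1 + ‖A‖) ^ n) * ((n.factorial : ℝ) * (1 + ‖B‖) ^ n) /
        (((n.factorial : ℝ) * m ^ n) * (n.factorial : ℝ)) := by
        apply div_le_div₀ (by positivity) h2 (by positivity) h3
    _ = ((1 + ‖A‖) * (1 + ‖B‖) / m) ^ n := by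
        rw [div_pow, mul_pow, eq_div_iff (by positivity)]
        field_simp
    _ ≤ (max 1 ((1 + ‖A‖) * (1 + ‖B‖) / m)) ^ n := by
        apply pow_le_pow_left₀ (by positivity) (le_max_right _ _)

lemma st18_cf_zero (A B C : ℂ) : st18cf A B C 0 = 1 := by
  simp [st18cf]

lemma st18_cf_rec (A B : ℂ) {C : ℂ} (hC : ∀ n : ℕ, (n : ℂ) + C ≠ 0) (n : ℕ) :
    st18cf A B C (n+1) * (((n:ℂ)+1) * ((n:ℂ)+C)) =
      st18cf A B C n * (((n:ℂ)+A) * ((n:ℂ)+B)) := by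
  have hpc := st18_poch_ne hC n
  have hcn := hC n
  have hfac : ((n.factorial : ℂ)) ≠ 0 := by exact_mod_cast n.factorial_ne_zero
  have hn1 : ((n:ℂ)+1) ≠ 0 := by
    have h : ((n:ℂ)+1) = ((n+1 : ℕ) : ℂ) := by push_cast; ring
    rw [h]
    exact Nat.cast_ne_zero.mpr (Nat.succ_ne_zero n)
  rw [st18cf, st18cf, ascPochhammer_succ_right, Nat.factorial_succ]
  simp only [eval_mul, eval_add, eval_X, eval_natCast]
  push_cast
  rw [div_mul_eq_mul_div, div_mul_eq_mul_div,
    div_eq_div_iff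
      (mul_ne_zero (mul_ne_zero hpc (by rw [add_comm]; exact hcn)) (mul_ne_zero hn1 hfac))
      (mul_ne_zero hpc hfac)]
  ring



lemma st18_sq_le_four_pow (n : ℕ) : ((n:ℝ)+1)^2 ≤ 4^n := by
  induction n with
  | zero => norm_num
  | succ m ih =>
    have h : ((m:ℝ)+1+1)^2 ≤ 4*((m:ℝ)+1)^2 := by nlinarith [Nat.cast_nonneg (α := ℝ) m]
    have : (4:ℝ)^(m+1) = 4*4^m := by ring
    push_cast
    nlinarith [ih]

lemma st18_norm_cast_succ (n : ℕ) : ‖((n:ℂ)+1)‖ = (n:ℝ)+1 := by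
  have h : ((n:ℂ)+1) = ((n+1:ℕ):ℂ) := by push_cast; ring
  rw [h, Complex.norm_natCast]; push_cast; ring

lemma st18_summable {f : ℕ → ℂ} {K r : ℝ} (hr0 : 0 ≤ r) (hr : r < 1)
    (hf : ∀ n, ‖f n‖ ≤ K * (((n:ℝ)+1)^2 * r^n)) : Summable f := by
  have hrn : ‖r‖ < 1 := by rwa [Real.norm_eq_abs, abs_of_nonneg hr0]
  have h2 := summable_pow_mul_geometric_of_norm_lt_one (R := ℝ) 2 hrn
  have h1 := summable_pow_mul_geometric_of_norm_lt_one (R := ℝ) 1 hrn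
  have h0 := summable_pow_mul_geometric_of_norm_lt_one (R := ℝ) 0 hrn
  have hg : Summable (fun n : ℕ => K * (((n:ℝ)+1)^2 * r^n)) := by
    have := ((h2.add (h1.mul_left 2)).add h0).mul_left K
    apply this.congr
    intro n
    push_cast
    ring
  exact Summable.of_norm_bounded hg hf

lemma st18_shift_bound {e : ℕ → ℂ} {M R : ℝ} (hb : ∀ n, ‖e n‖ ≤ M * R ^ n) (k n : ℕ) :
    ‖e (n+k)‖ ≤ (M*R^k) * R^n := by
  calc ‖e (n+k)‖ ≤ M * R ^ (n+k) := hb _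
    _ = (M*R^k) * R^n := by rw [pow_add]; ring

/-- summability of families `g n * x^n` where `‖g n‖ ≤ κ (n+1)² ‖e (n+k)‖`. -/
lemma st18_summable_family {e : ℕ → ℂ} {M R : ℝ} (hM : 0 ≤ M) (hR : 1 ≤ R)
    (hb : ∀ n, ‖e n‖ ≤ M * R ^ n) {x : ℂ} (hx : ‖x‖ < (4*R)⁻¹)
    (g : ℕ → ℂ) (κ : ℝ) (hκ : 0 ≤ κ) (k : ℕ) (hk : k ≤ 2)
    (hg : ∀ n, ‖g n‖ ≤ κ * (((n:ℝ)+1)^2 * ‖e (n + k)‖)) :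
    Summable (fun n => g n * x^n) := by
  have hR0 : (0:ℝ) < R := lt_of_lt_of_le one_pos hR
  have hr0 : 0 ≤ R * ‖x‖ := by positivity
  have hr : R * ‖x‖ < 1 := by
    have h1 : R * ‖x‖ < R * (4*R)⁻¹ := by
      apply mul_lt_mul_of_pos_left hx hR0
    have h2 : R * (4*R)⁻¹ = 4⁻¹ := by field_simp
    rw [h2] at h1; linarith
  apply st18_summable (K := κ * (M * R^2)) hr0 hr
  intro n
  have h1 : ‖g n * x^n‖ = ‖g n‖ * ‖x‖^n := by rw [norm_mul, norm_pow]
  have h2 : ‖e (n+k)‖ ≤ (M*R^k) * R^n := st18_shift_bound hb k n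
  have h3 : M * R^k ≤ M * R^2 := by
    apply mul_le_mul_of_nonneg_left _ hM
    exact pow_le_pow_right₀ hR hk
  have h4 : ‖g n‖ ≤ κ * (((n:ℝ)+1)^2 * ((M*R^2) * R^n)) := by
    calc ‖g n‖ ≤ κ * (((n:ℝ)+1)^2 * ‖e (n + k)‖) := hg n
      _ ≤ κ * (((n:ℝ)+1)^2 * ((M*R^2) * R^n)) := by
          apply mul_le_mul_of_nonneg_left _ hκ
          apply mul_le_mul_of_nonneg_left _ (by positivity)
          calc ‖e (n+k)‖ ≤ (M*R^k) * R^n := h2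
            _ ≤ (M*R^2) * R^n := by
                apply mul_le_mul_of_nonneg_right h3 (by positivity)
    
  calc ‖g n * x^n‖ = ‖g n‖ * ‖x‖^n := h1
    _ ≤ (κ * (((n:ℝ)+1)^2 * ((M*R^2) * R^n))) * ‖x‖^n := by
        apply mul_le_mul_of_nonneg_right h4 (by positivity)
    _ = κ * (M*R^2) * (((n:ℝ)+1)^2 * (R*‖x‖)^n) := by
        rw [mul_pow]; ring

lemma st18S_zero (e : ℕ → ℂ) : st18S e 0 = e 0 := by
  rw [st18S, tsum_eq_single 0]
  · norm_num
  · intro n hn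
    rw [zero_pow hn, mul_zero]

lemma st18_hasDerivAt {e : ℕ → ℂ} {M R : ℝ} (hM : 0 ≤ M) (hR : 1 ≤ R)
    (hb : ∀ n, ‖e n‖ ≤ M * R ^ n) {x : ℂ} (hx : ‖x‖ < (4*R)⁻¹) :
    HasDerivAt (st18S e) (st18S (st18sh e) x) x := by
  have hR0 : (0:ℝ) < R := lt_of_lt_of_le one_pos hR
  set t : Set ℂ := Metric.ball 0 (4*R)⁻¹ with ht
  have hxt : x ∈ t := by simpa [ht, Metric.mem_ball, dist_zero_right] using hx
  have h0t : (0:ℂ) ∈ t := by simp [ht, Metric.mem_ball]; positivity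
  have hu : Summable (fun n : ℕ => (4*M*R) * ((n:ℝ) * (4⁻¹:ℝ)^n)) := by
    have h1 := summable_pow_mul_geometric_of_norm_lt_one (R := ℝ) 1 (r := 4⁻¹) (by norm_num)
    have := h1.mul_left (4*M*R)
    apply this.congr; intro n; push_cast; ring
  have hder : ∀ (n:ℕ) (y:ℂ), y ∈ t → HasDerivAt (fun z => e n * z^n) (e n * ((n:ℂ) * y^(n-1))) y :=
    fun n y _ => (hasDerivAt_pow n y).const_mul (e n)
  have hbound : ∀ (n:ℕ) (y:ℂ), y ∈ t → ‖e n * ((n:ℂ) * y^(n-1))‖ ≤ (4*M*R) * ((n:ℝ) * (4⁻¹:ℝ)^n) := by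
    intro n y hy
    have hyn : ‖y‖ ≤ (4*R)⁻¹ := by
      rw [ht, Metric.mem_ball, dist_zero_right] at hy; linarith
    match n with
    | 0 => simp
    | (m+1) =>
      have h1 : ‖e (m+1) * (((m+1:ℕ):ℂ) * y^m)‖ = ‖e (m+1)‖ * (((m:ℝ)+1) * ‖y‖^m) := by
        rw [norm_mul, norm_mul, norm_pow, Complex.norm_natCast]
        push_cast; ring
      rw [show (m+1) - 1 = m from rfl, h1]
      have h2 : ‖y‖^m ≤ ((4*R)⁻¹)^m := pow_le_pow_left₀ (norm_nonneg y) hyn m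
      have h3 : ‖e (m+1)‖ * (((m:ℝ)+1) * ‖y‖^m) ≤ (M*R^(m+1)) * (((m:ℝ)+1) * ((4*R)⁻¹)^m) := by
        apply mul_le_mul (hb (m+1)) _ (by positivity) (by positivity)
        apply mul_le_mul_of_nonneg_left h2 (by positivity)
      have h4 : (M*R^(m+1)) * (((m:ℝ)+1) * ((4*R)⁻¹)^m) = (4*M*R) * (((m:ℝ)+1) * (4⁻¹:ℝ)^(m+1)) := by
        rw [mul_inv, mul_pow]
        have hRm : R^m * (R⁻¹)^m = 1 := by rw [← mul_pow, mul_inv_cancel₀ hR0.ne', one_pow]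
        linear_combination (M*R*((m:ℝ)+1)*(4⁻¹:ℝ)^m) * hRm
      calc ‖e (m+1)‖ * (((m:ℝ)+1) * ‖y‖^m) ≤ (M*R^(m+1)) * (((m:ℝ)+1) * ((4*R)⁻¹)^m) := h3
        _ = (4*M*R) * (((m:ℝ)+1) * (4⁻¹:ℝ)^(m+1)) := h4
        _ = (4*M*R) * (((m+1:ℕ):ℝ) * (4⁻¹:ℝ)^(m+1)) := by push_cast; ring
  have hg0 : Summable (fun n => e n * (0:ℂ)^n) := by
    apply summable_of_ne_finset_zero (s := {0})
    intro n hn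
    simp only [Finset.mem_singleton] at hn
    rw [zero_pow hn, mul_zero]
  have H := hasDerivAt_tsum_of_isPreconnected hu Metric.isOpen_ball
    (convex_ball (0:ℂ) _).isPreconnected hder hbound h0t hg0 hxt
  have hs : Summable (fun n => e n * ((n:ℂ) * x^(n-1))) :=
    Summable.of_norm_bounded hu (fun n => hbound n x hxt)
  have hid : ∑' n, e n * ((n:ℂ) * x^(n-1)) = st18S (st18sh e) x := by
    rw [Summable.tsum_eq_zero_add hs]
    simp only [Nat.cast_zero, zero_mul, mul_zero, zero_add]
    rw [st18S]
    apply tsum_congr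
    intro n
    rw [st18sh]
    push_cast [Nat.add_sub_cancel]
    ring
  rw [← hid]
  exact H

/-- the master combination identity -/
lemma st18_comb (A B C : ℂ) {e : ℕ → ℂ} {M R : ℝ} (hM : 0 ≤ M) (hR : 1 ≤ R)
    (hb : ∀ n, ‖e n‖ ≤ M * R ^ n) {x : ℂ} (hx : ‖x‖ < (4*R)⁻¹) :
    x*(1-x)*st18S (st18sh (st18sh e)) x + (C-(A+B+1)*x)*st18S (st18sh e) x
      - A*B*st18S e x
    = ∑' n : ℕ, ((((n:ℂ)+1)*((n:ℂ)+C))*e (n+1) - (((n:ℂ)+A)*((n:ℂ)+B))*e n) * x^n := by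
  have hR0 : (0:ℝ) < R := lt_of_lt_of_le one_pos hR
  -- summability of the families
  have hs0 : Summable (fun n => e n * x^n) := by
    apply st18_summable_family hM hR hb hx _ 1 (by norm_num) 0 (by norm_num)
    intro n
    simp only [Nat.add_zero]
    have h : (1:ℝ) ≤ ((n:ℝ)+1)^2 := by nlinarith [Nat.cast_nonneg (α := ℝ) n]
    nlinarith [norm_nonneg (e n), Nat.cast_nonneg (α := ℝ) n]
  have hnorm_sh : ∀ n, ‖st18sh e n‖ = ((n:ℝ)+1) * ‖e (n+1)‖ := by
    intro n; rw [st18sh, norm_mul, st18_norm_cast_succ]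
  have hs1 : Summable (fun n => st18sh e n * x^n) := by
    apply st18_summable_family hM hR hb hx _ 1 (by norm_num) 1 (by norm_num)
    intro n
    rw [hnorm_sh]
    have h : ((n:ℝ)+1) ≤ ((n:ℝ)+1)^2 := by nlinarith [Nat.cast_nonneg (α := ℝ) n]
    nlinarith [norm_nonneg (e (n+1))]
  have hs2 : Summable (fun n => st18sh (st18sh e) n * x^n) := by
    apply st18_summable_family hM hR hb hx _ 2 (by norm_num) 2 (by norm_num)
    intro n
    rw [st18sh, norm_mul, st18_norm_cast_succ, hnorm_sh]
    have hn : (0:ℝ) ≤ (n:ℝ) := Nat.cast_nonneg n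
    have h : ((n:ℝ)+1) * (((n:ℝ)+1)+1) ≤ 2*((n:ℝ)+1)^2 := by nlinarith
    push_cast
    nlinarith [norm_nonneg (e (n+2))]
  have hs3 : Summable (fun n : ℕ => ((n:ℂ) * e n) * x^n) := by
    apply st18_summable_family hM hR hb hx _ 1 (by norm_num) 0 (by norm_num)
    intro n
    rw [norm_mul, Complex.norm_natCast]
    have hn : (0:ℝ) ≤ (n:ℝ) := Nat.cast_nonneg n
    simp only [Nat.add_zero]
    have h : (n:ℝ) ≤ ((n:ℝ)+1)^2 := by nlinarith
    nlinarith [norm_nonneg (e n)]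
  have hs4 : Summable (fun n : ℕ => ((n:ℂ) * ((n:ℂ)-1) * e n) * x^n) := by
    apply st18_summable_family hM hR hb hx _ 1 (by norm_num) 0 (by norm_num)
    intro n
    rw [norm_mul, norm_mul, Complex.norm_natCast]
    have hn : (0:ℝ) ≤ (n:ℝ) := Nat.cast_nonneg n
    have h1 : ‖(n:ℂ)-1‖ ≤ (n:ℝ)+1 := by
      calc ‖(n:ℂ)-1‖ ≤ ‖(n:ℂ)‖ + ‖(1:ℂ)‖ := norm_sub_le _ _
        _ = (n:ℝ)+1 := by rw [Complex.norm_natCast, norm_one]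
    simp only [Nat.add_zero]
    have h2 : (n:ℝ) * ‖(n:ℂ)-1‖ ≤ ((n:ℝ)+1)^2 := by nlinarith [norm_nonneg ((n:ℂ)-1)]
    nlinarith [norm_nonneg (e n), norm_nonneg ((n:ℂ)-1)]
  have hs5 : Summable (fun n : ℕ => ((n:ℂ) * st18sh e n) * x^n) := by
    apply st18_summable_family hM hR hb hx _ 1 (by norm_num) 1 (by norm_num)
    intro n
    rw [norm_mul, Complex.norm_natCast, hnorm_sh]
    have hn : (0:ℝ) ≤ (n:ℝ) := Nat.cast_nonneg n
    have h : (n:ℝ) * ((n:ℝ)+1) ≤ ((n:ℝ)+1)^2 := by nlinarith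
    nlinarith [norm_nonneg (e (n+1))]
  -- HasSum versions
  have h0 : HasSum (fun n => e n * x^n) (st18S e x) := hs0.hasSum
  have h1 : HasSum (fun n => st18sh e n * x^n) (st18S (st18sh e) x) := hs1.hasSum
  have h2 : HasSum (fun n => st18sh (st18sh e) n * x^n) (st18S (st18sh (st18sh e)) x) := hs2.hasSum
  -- shifted identities
  have eq1 : HasSum (fun n : ℕ => ((n:ℂ) * st18sh e n) * x^n) (x * st18S (st18sh (st18sh e)) x) := by
    have hh := h2.mul_left x
    have hfun : (fun n => x * (st18sh (st18sh e) n * x^n))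
        = (fun n => (((n+1:ℕ):ℂ) * st18sh e (n+1)) * x^(n+1)) := by
      funext n
      rw [st18sh]
      push_cast
      ring
    rw [hfun] at hh
    have := (hasSum_nat_add_iff (f := fun n : ℕ => ((n:ℂ) * st18sh e n) * x^n) 1).mp hh
    simpa using this
  have eq3 : HasSum (fun n : ℕ => ((n:ℂ) * e n) * x^n) (x * st18S (st18sh e) x) := by
    have hh := h1.mul_left x
    have hfun : (fun n => x * (st18sh e n * x^n))
        = (fun n => (((n+1:ℕ):ℂ) * e (n+1)) * x^(n+1)) := by
      funext n
      rw [st18sh]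
      push_cast
      ring
    rw [hfun] at hh
    have := (hasSum_nat_add_iff (f := fun n : ℕ => ((n:ℂ) * e n) * x^n) 1).mp hh
    simpa using this
  have eq2 : HasSum (fun n : ℕ => ((n:ℂ) * ((n:ℂ)-1) * e n) * x^n) (x^2 * st18S (st18sh (st18sh e)) x) := by
    have hh := h2.mul_left (x^2)
    have hfun : (fun n => x^2 * (st18sh (st18sh e) n * x^n))
        = (fun n => (((n+2:ℕ):ℂ) * (((n+2:ℕ):ℂ)-1) * e (n+2)) * x^(n+2)) := by
      funext n
      rw [st18sh, st18sh]
      push_cast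
      ring
    rw [hfun] at hh
    have := (hasSum_nat_add_iff (f := fun n : ℕ => ((n:ℂ) * ((n:ℂ)-1) * e n) * x^n) 2).mp hh
    have hz : ∑ i ∈ Finset.range 2, ((i:ℂ) * ((i:ℂ)-1) * e i) * x^i = 0 := by
      simp [Finset.sum_range_succ]
    rw [hz, add_zero] at this
    exact this
  -- combine
  have big := ((eq1.sub eq2).add ((h1.mul_left C).sub (eq3.mul_left (A+B+1)))).sub (h0.mul_left (A*B))
  have hfun2 : (fun n : ℕ => ((n:ℂ) * st18sh e n) * x^n - ((n:ℂ) * ((n:ℂ)-1) * e n) * x^n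
        + (C * (st18sh e n * x^n) - (A+B+1) * (((n:ℂ) * e n) * x^n))
        - A*B * (e n * x^n))
      = (fun n : ℕ => ((((n:ℂ)+1)*((n:ℂ)+C))*e (n+1) - (((n:ℂ)+A)*((n:ℂ)+B))*e n) * x^n) := by
    funext n
    rw [st18sh]
    push_cast
    ring
  rw [hfun2] at big
  rw [big.tsum_eq]
  ring

lemma st18_vanish {e : ℕ → ℂ} {M R : ℝ} (hM : 0 ≤ M) (hR : 1 ≤ R)
    (hb : ∀ n, ‖e n‖ ≤ M * R ^ n) {r' : ℝ} (hr' : 0 < r')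
    (h0 : ∀ x : ℂ, ‖x‖ < r' → st18S e x = 0) : ∀ n, e n = 0 := by
  have hR0 : (0:ℝ) < R := lt_of_lt_of_le one_pos hR
  set ρ : ℝ := min r' (4*R)⁻¹ with hρdef
  have hρ : 0 < ρ := lt_min hr' (by positivity)
  have claim : ∀ k, ∀ x : ℂ, ‖x‖ < ρ → st18S (fun n => e (n+k)) x = 0 := by
    intro k
    induction k with
    | zero =>
      intro x hx
      have := h0 x (lt_of_lt_of_le hx (min_le_left _ _))
      simpa using this
    | succ k ih =>
      have hfb : ∀ m, ‖e (m+k)‖ ≤ (M*R^k) * R^m := st18_shift_bound hb k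
      have hMk : 0 ≤ M*R^k := by positivity
      intro x hx
      have hxR : ‖x‖ < (4*R)⁻¹ := lt_of_lt_of_le hx (min_le_right _ _)
      have hgoal : st18S (fun n => e (n+(k+1))) x = st18S (fun n => e ((n+1)+k)) x := by
        congr 1
        funext n
        congr 1
        omega
      rw [hgoal]
      by_cases hx0 : x = 0
      · -- value at 0 is e (1+k); get it from the derivative of st18S (· + k) at 0
        subst hx0
        rw [st18S_zero]
        have hd := st18_hasDerivAt hMk hR hfb (x := 0) (by simpa using (by positivity : (0:ℝ) < (4*R)⁻¹))
        have hz : st18S (fun n => e (n+k)) =ᶠ[nhds (0:ℂ)] (fun _ => (0:ℂ)) := by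
          apply Filter.eventually_of_mem (Metric.ball_mem_nhds (0:ℂ) hρ)
          intro y hy
          rw [Metric.mem_ball, dist_zero_right] at hy
          exact ih y hy
        have hd0 : HasDerivAt (st18S (fun n => e (n+k))) 0 0 :=
          (hasDerivAt_const (0:ℂ) (0:ℂ)).congr_of_eventuallyEq hz
        have huniq := hd.unique hd0
        rw [st18S_zero] at huniq
        rw [st18sh] at huniq
        simp only [Nat.cast_zero, zero_add, one_mul] at huniq
        exact huniq
      · have hsf : Summable (fun n => e (n+k) * x^n) := by
          apply st18_summable_family (e := fun n => e (n+k)) hMk hR hfb hxR _ 1 (by norm_num) 0 (by norm_num)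
          intro n
          simp only [Nat.add_zero]
          have h : (1:ℝ) ≤ ((n:ℝ)+1)^2 := by nlinarith [Nat.cast_nonneg (α := ℝ) n]
          nlinarith [norm_nonneg (e (n+k))]
        have hih := ih x hx
        rw [st18S, Summable.tsum_eq_zero_add hsf] at hih
        have hz0 : e (0+k) = 0 := by
          have := ih 0 (by simpa using hρ)
          rwa [st18S_zero] at this
        rw [hz0, zero_mul, zero_add] at hih
        have hmul : ∑' n, e ((n+1)+k) * x^(n+1) = x * ∑' n, e ((n+1)+k) * x^n := by
          rw [← tsum_mul_left]
          apply tsum_congr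
          intro n
          ring
        rw [hmul] at hih
        have := mul_eq_zero.mp hih
        rcases this with h | h
        · exact absurd h hx0
        · exact h
  intro n
  have := claim n 0 (by simpa using hρ)
  rw [st18S_zero] at this
  simpa using this

lemma st18_succ_le_two_pow (n : ℕ) : ((n:ℝ)+1+1) ≤ 2*2^n := by
  induction n with
  | zero => norm_num
  | succ m ih =>
    have h2 : (2:ℝ)*2^(m+1) = 2*(2*2^m) := by ring
    push_cast
    push_cast at ih
    nlinarith [ih]

lemma st18_cast_le_two_pow (n : ℕ) : ((n:ℝ)+1) ≤ 2^n := by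
  induction n with
  | zero => norm_num
  | succ m ih =>
    have h2 : (2:ℝ)^(m+1) = 2*2^m := by ring
    push_cast
    nlinarith [ih]

lemma st18_sh_bound {e : ℕ → ℂ} {M R : ℝ} (hM : 0 ≤ M) (hR : 1 ≤ R)
    (hb : ∀ n, ‖e n‖ ≤ M * R ^ n) (n : ℕ) : ‖st18sh e n‖ ≤ (M*(2*R)) * (2*R)^n := by
  have hR0 : (0:ℝ) < R := lt_of_lt_of_le one_pos hR
  rw [st18sh, norm_mul, st18_norm_cast_succ]
  have h1 : ‖e (n+1)‖ ≤ M * R^(n+1) := hb _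
  have h2 : ((n:ℝ)+1) ≤ 2^n := st18_cast_le_two_pow n
  have hX : (0:ℝ) ≤ M*R*(2^n*R^n) := by positivity
  calc ((n:ℝ)+1) * ‖e (n+1)‖ ≤ (2:ℝ)^n * (M * R^(n+1)) := by
        apply mul_le_mul h2 h1 (norm_nonneg _) (by positivity)
    _ = M*R*(2^n*R^n) := by rw [pow_succ]; ring
    _ ≤ 2*(M*R*(2^n*R^n)) := by nlinarith [hX]
    _ = (M*(2*R)) * (2*R)^n := by rw [mul_pow]; ring

/-- growth of the recurrence residual -/
lemma st18_tau_bound (A B C : ℂ) {e : ℕ → ℂ} {M R : ℝ} (hM : 0 ≤ M) (hR : 1 ≤ R)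
    (hb : ∀ n, ‖e n‖ ≤ M * R ^ n) (n : ℕ) :
    ‖(((n:ℂ)+1)*((n:ℂ)+C))*e (n+1) - (((n:ℂ)+A)*((n:ℂ)+B))*e n‖
      ≤ ((M*R*(1+‖C‖)) + M*(1+‖A‖)*(1+‖B‖)) * (4*R)^n := by
  have hR0 : (0:ℝ) < R := lt_of_lt_of_le one_pos hR
  have hn0 : (0:ℝ) ≤ (n:ℝ) := Nat.cast_nonneg n
  have hsq := st18_sq_le_four_pow n
  have h4R : (4:ℝ)^n * R^n = (4*R)^n := by rw [mul_pow]
  have hnC : ‖(n:ℂ)+C‖ ≤ (n:ℝ) + ‖C‖ := by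
    calc ‖(n:ℂ)+C‖ ≤ ‖(n:ℂ)‖ + ‖C‖ := norm_add_le _ _
      _ = (n:ℝ) + ‖C‖ := by rw [Complex.norm_natCast]
  have hnA : ‖(n:ℂ)+A‖ ≤ (n:ℝ) + ‖A‖ := by
    calc ‖(n:ℂ)+A‖ ≤ ‖(n:ℂ)‖ + ‖A‖ := norm_add_le _ _
      _ = (n:ℝ) + ‖A‖ := by rw [Complex.norm_natCast]
  have hnB : ‖(n:ℂ)+B‖ ≤ (n:ℝ) + ‖B‖ := by
    calc ‖(n:ℂ)+B‖ ≤ ‖(n:ℂ)‖ + ‖B‖ := norm_add_le _ _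
      _ = (n:ℝ) + ‖B‖ := by rw [Complex.norm_natCast]
  have t1 : ‖(((n:ℂ)+1)*((n:ℂ)+C))*e (n+1)‖ ≤ (M*R*(1+‖C‖)) * (4*R)^n := by
    rw [norm_mul, norm_mul, st18_norm_cast_succ]
    have e1 : ‖e (n+1)‖ ≤ M * R^(n+1) := hb _
    have h1 : ((n:ℝ)+1) * ‖(n:ℂ)+C‖ ≤ ((n:ℝ)+1)^2 * (1+‖C‖) := by
      have : (n:ℝ) + ‖C‖ ≤ ((n:ℝ)+1)*(1+‖C‖) := by nlinarith [norm_nonneg C]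
      calc ((n:ℝ)+1) * ‖(n:ℂ)+C‖ ≤ ((n:ℝ)+1) * ((n:ℝ) + ‖C‖) := by
            apply mul_le_mul_of_nonneg_left hnC (by positivity)
        _ ≤ ((n:ℝ)+1) * (((n:ℝ)+1)*(1+‖C‖)) := by
            apply mul_le_mul_of_nonneg_left this (by positivity)
        _ = ((n:ℝ)+1)^2 * (1+‖C‖) := by ring
    calc ((n:ℝ)+1) * ‖(n:ℂ)+C‖ * ‖e (n+1)‖
        ≤ (((n:ℝ)+1)^2 * (1+‖C‖)) * (M * R^(n+1)) := by
          apply mul_le_mul h1 e1 (norm_nonneg _) (by positivity)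
      _ ≤ ((4:ℝ)^n * (1+‖C‖)) * (M * R^(n+1)) := by
          have : (0:ℝ) ≤ (1+‖C‖) * (M * R^(n+1)) := by positivity
          nlinarith [hsq, this]
      _ = (M*R*(1+‖C‖)) * ((4:ℝ)^n * R^n) := by rw [pow_succ]; ring
      _ = (M*R*(1+‖C‖)) * (4*R)^n := by rw [h4R]
  have t2 : ‖(((n:ℂ)+A)*((n:ℂ)+B))*e n‖ ≤ (M*(1+‖A‖)*(1+‖B‖)) * (4*R)^n := by
    rw [norm_mul, norm_mul]
    have e0 : ‖e n‖ ≤ M * R^n := hb _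
    have hA' : ‖(n:ℂ)+A‖ ≤ ((n:ℝ)+1) * (1+‖A‖) := by
      calc ‖(n:ℂ)+A‖ ≤ (n:ℝ) + ‖A‖ := hnA
        _ ≤ ((n:ℝ)+1)*(1+‖A‖) := by nlinarith [norm_nonneg A]
    have hB' : ‖(n:ℂ)+B‖ ≤ ((n:ℝ)+1) * (1+‖B‖) := by
      calc ‖(n:ℂ)+B‖ ≤ (n:ℝ) + ‖B‖ := hnB
        _ ≤ ((n:ℝ)+1)*(1+‖B‖) := by nlinarith [norm_nonneg B]
    calc ‖(n:ℂ)+A‖ * ‖(n:ℂ)+B‖ * ‖e n‖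
        ≤ (((n:ℝ)+1)*(1+‖A‖)) * (((n:ℝ)+1)*(1+‖B‖)) * (M * R^n) := by
          apply mul_le_mul _ e0 (norm_nonneg _) (by positivity)
          apply mul_le_mul hA' hB' (norm_nonneg _) (by positivity)
      _ = (((n:ℝ)+1)^2) * ((1+‖A‖) * (1+‖B‖) * (M * R^n)) := by ring
      _ ≤ ((4:ℝ)^n) * ((1+‖A‖) * (1+‖B‖) * (M * R^n)) := by
          have : (0:ℝ) ≤ (1+‖A‖) * (1+‖B‖) * (M * R^n) := by positivity
          nlinarith [hsq]
      _ = (M*(1+‖A‖)*(1+‖B‖)) * ((4:ℝ)^n * R^n) := by ring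
      _ = (M*(1+‖A‖)*(1+‖B‖)) * (4*R)^n := by rw [h4R]
  calc ‖(((n:ℂ)+1)*((n:ℂ)+C))*e (n+1) - (((n:ℂ)+A)*((n:ℂ)+B))*e n‖
      ≤ ‖(((n:ℂ)+1)*((n:ℂ)+C))*e (n+1)‖ + ‖(((n:ℂ)+A)*((n:ℂ)+B))*e n‖ := norm_sub_le _ _
    _ ≤ (M*R*(1+‖C‖)) * (4*R)^n + (M*(1+‖A‖)*(1+‖B‖)) * (4*R)^n := add_le_add t1 t2
    _ = ((M*R*(1+‖C‖)) + M*(1+‖A‖)*(1+‖B‖)) * (4*R)^n := by ring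

lemma st18_lin_deriv (x : ℂ) : HasDerivAt (fun y : ℂ => 1-4*y) (-4) x := by
  simpa using ((hasDerivAt_id x).const_mul (4:ℂ)).const_sub 1

lemma st18_U_deriv (a x : ℂ) (hs : (1-4*x) ∈ Complex.slitPlane) (h0 : (1-4*x) ≠ 0) :
    HasDerivAt (fun y : ℂ => (1-4*y)^(-a)) (4*a*(1-4*x)^(-a)/(1-4*x)) x := by
  have := (st18_lin_deriv x).cpow_const (c := -a) hs
  convert this using 1
  rw [show (-a - 1) = (-a) + (-1) by ring, Complex.cpow_add _ _ h0, Complex.cpow_neg_one]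
  field_simp

lemma st18_U2_deriv (a x : ℂ) (hs : (1-4*x) ∈ Complex.slitPlane) (h0 : (1-4*x) ≠ 0) :
    HasDerivAt (fun y : ℂ => 4*a*(1-4*y)^(-a)/(1-4*y))
      (16*a*(a+1)*(1-4*x)^(-a)/(1-4*x)^2) x := by
  have hU := (st18_U_deriv a x hs h0).const_mul (4*a)
  have := hU.div (st18_lin_deriv x) h0
  refine this.congr_deriv ?_
  field_simp
  ring

lemma st18_W_deriv (x : ℂ) (h0 : (4*x-1) ≠ 0) :
    HasDerivAt (fun y : ℂ => 27*y/(4*y-1)^3) (-27*(8*x+1)/(4*x-1)^4) x := by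
  have hnum : HasDerivAt (fun y : ℂ => 27*y) 27 x := by
    simpa using (hasDerivAt_id x).const_mul (27:ℂ)
  have h1 : HasDerivAt (fun y : ℂ => 4*y-1) 4 x := by
    simpa using ((hasDerivAt_id x).const_mul (4:ℂ)).sub_const 1
  have hden : HasDerivAt (fun y : ℂ => (4*y-1)^3) (((3:ℕ):ℂ)*(4*x-1)^2*4) x := by
    exact h1.pow 3
  have := hnum.div hden (pow_ne_zero 3 h0)
  refine this.congr_deriv ?_
  push_cast
  field_simp
  ring

lemma st18_W2_deriv (x : ℂ) (h0 : (4*x-1) ≠ 0) :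
    HasDerivAt (fun y : ℂ => -27*(8*y+1)/(4*y-1)^4) (648*(4*x+1)/(4*x-1)^5) x := by
  have hnum : HasDerivAt (fun y : ℂ => -27*(8*y+1)) (-27*8) x := by
    simpa using (((hasDerivAt_id x).const_mul (8:ℂ)).add_const 1).const_mul (-27:ℂ)
  have h1 : HasDerivAt (fun y : ℂ => 4*y-1) 4 x := by
    simpa using ((hasDerivAt_id x).const_mul (4:ℂ)).sub_const 1
  have hden : HasDerivAt (fun y : ℂ => (4*y-1)^4) (((4:ℕ):ℂ)*(4*x-1)^3*4) x := h1.pow 4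
  have := hnum.div hden (pow_ne_zero 4 h0)
  refine this.congr_deriv ?_
  push_cast
  field_simp
  ring

/-- the cpow prefactor -/
def st18U (a x : ℂ) : ℂ := (1-4*x)^(-a)
/-- the cubic argument -/
def st18W (x : ℂ) : ℂ := 27*x/(4*x-1)^3
def st18G (a : ℂ) (cH : ℕ → ℂ) (x : ℂ) : ℂ := st18U a x * st18S cH (st18W x)
def st18G1 (a : ℂ) (cH : ℕ → ℂ) (x : ℂ) : ℂ :=
  (-4*a*((4*x-1)⁻¹)*st18U a x) * st18S cH (st18W x)
    + st18U a x * (st18S (st18sh cH) (st18W x) * (-27*(8*x+1)*((4*x-1)⁻¹)^4))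
def st18G2 (a : ℂ) (cH : ℕ → ℂ) (x : ℂ) : ℂ :=
  (16*a*(a+1)*((4*x-1)⁻¹)^2*st18U a x) * st18S cH (st18W x)
    + 2*((-4*a*((4*x-1)⁻¹)*st18U a x) * (st18S (st18sh cH) (st18W x) * (-27*(8*x+1)*((4*x-1)⁻¹)^4)))
    + st18U a x * (st18S (st18sh (st18sh cH)) (st18W x) * (-27*(8*x+1)*((4*x-1)⁻¹)^4)^2
        + st18S (st18sh cH) (st18W x) * (648*(4*x+1)*((4*x-1)⁻¹)^5))

lemma st18_Wd (x : ℂ) (ht : (4*x-1) ≠ 0) :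
    HasDerivAt st18W (-27*(8*x+1)*((4*x-1)⁻¹)^4) x := by
  have h := st18_W_deriv x ht
  have he : -27*(8*x+1)*((4*x-1)⁻¹)^4 = -27*(8*x+1)/(4*x-1)^4 := by
    rw [inv_pow, div_eq_mul_inv]
  rw [he]
  exact h

lemma st18_Ud (a x : ℂ) (hs : (1-4*x) ∈ Complex.slitPlane) (h14 : (1-4*x) ≠ 0) :
    HasDerivAt (st18U a) (-4*a*((4*x-1)⁻¹)*st18U a x) x := by
  have h := st18_U_deriv a x hs h14
  have hinv : (1-4*x)⁻¹ = -((4*x-1)⁻¹) := by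
    rw [show (1:ℂ)-4*x = -(4*x-1) from by ring, inv_neg]
  have he : -4*a*((4*x-1)⁻¹)*st18U a x = 4*a*(1-4*x)^(-a)/(1-4*x) := by
    rw [st18U, div_eq_mul_inv, hinv]; ring
  rw [he]
  exact h

lemma st18_G_deriv (a : ℂ) (cH : ℕ → ℂ) {x : ℂ}
    (ht : (4*x-1) ≠ 0) (hs : (1-4*x) ∈ Complex.slitPlane) (h14 : (1-4*x) ≠ 0)
    (hH1 : HasDerivAt (st18S cH) (st18S (st18sh cH) (st18W x)) (st18W x)) :
    HasDerivAt (st18G a cH) (st18G1 a cH x) x := by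
  have hWd := st18_Wd x ht
  have hHW : HasDerivAt (fun y => st18S cH (st18W y))
      (st18S (st18sh cH) (st18W x) * (-27*(8*x+1)*((4*x-1)⁻¹)^4)) x := hH1.comp x hWd
  have hUd := st18_Ud a x hs h14
  have h := hUd.mul hHW
  have : st18G a cH = fun y => st18U a y * st18S cH (st18W y) := rfl
  rw [this, st18G1]
  exact h

lemma st18_Vd (x : ℂ) (ht : (4*x-1) ≠ 0) :
    HasDerivAt (fun y : ℂ => (4*y-1)⁻¹) (-4*((4*x-1)⁻¹)^2) x := by
  have h1 : HasDerivAt (fun y : ℂ => 4*y-1) 4 x := by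
    simpa using ((hasDerivAt_id x).const_mul (4:ℂ)).sub_const 1
  have h := h1.inv ht
  have he : -4*((4*x-1)⁻¹)^2 = -(4)/(4*x-1)^2 := by
    rw [inv_pow, div_eq_mul_inv]
  rw [he]
  exact h

lemma st18_G1_deriv (a : ℂ) (cH : ℕ → ℂ) {x : ℂ}
    (ht : (4*x-1) ≠ 0) (hs : (1-4*x) ∈ Complex.slitPlane) (h14 : (1-4*x) ≠ 0)
    (hH1 : HasDerivAt (st18S cH) (st18S (st18sh cH) (st18W x)) (st18W x))
    (hH2 : HasDerivAt (st18S (st18sh cH)) (st18S (st18sh (st18sh cH)) (st18W x)) (st18W x)) :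
    HasDerivAt (st18G1 a cH) (st18G2 a cH x) x := by
  have hrel : (4*x-1)*(4*x-1)⁻¹ = 1 := mul_inv_cancel₀ ht
  have hWd := st18_Wd x ht
  have hVd := st18_Vd x ht
  have hUd := st18_Ud a x hs h14
  have hHW : HasDerivAt (fun y => st18S cH (st18W y))
      (st18S (st18sh cH) (st18W x) * (-27*(8*x+1)*((4*x-1)⁻¹)^4)) x := hH1.comp x hWd
  have hH1W : HasDerivAt (fun y => st18S (st18sh cH) (st18W y))
      (st18S (st18sh (st18sh cH)) (st18W x) * (-27*(8*x+1)*((4*x-1)⁻¹)^4)) x := hH2.comp x hWd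
  have hw1d : HasDerivAt (fun y : ℂ => -27*(8*y+1)*((4*y-1)⁻¹)^4)
      (648*(4*x+1)*((4*x-1)⁻¹)^5) x := by
    have hlin : HasDerivAt (fun y : ℂ => -27*(8*y+1)) (-27*8) x := by
      simpa using (((hasDerivAt_id x).const_mul (8:ℂ)).add_const 1).const_mul (-27:ℂ)
    have hp : HasDerivAt (fun y : ℂ => ((4*y-1)⁻¹)^4)
        (((4:ℕ):ℂ)*((4*x-1)⁻¹)^3 * (-4*((4*x-1)⁻¹)^2)) x := hVd.pow 4
    have h := hlin.mul hp
    refine h.congr_deriv ?_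
    push_cast
    linear_combination (216*((4*x-1)⁻¹)^4 : ℂ) * hrel
  have hu1d : HasDerivAt (fun y : ℂ => -4*a*((4*y-1)⁻¹)*st18U a y)
      (16*a*(a+1)*((4*x-1)⁻¹)^2*st18U a x) x := by
    have hfe : (fun y : ℂ => -4*a*((4*y-1)⁻¹)*st18U a y)
        = fun y : ℂ => -4*a*(((4*y-1)⁻¹)*st18U a y) := by funext y; ring
    rw [hfe]
    have h := (hVd.mul hUd).const_mul (-4*a)
    refine h.congr_deriv ?_
    ring
  have t1 := hu1d.mul hHW
  have t2 := hUd.mul (hH1W.mul hw1d)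
  have h := t1.add t2
  have hfe : st18G1 a cH = fun y : ℂ =>
      (-4*a*((4*y-1)⁻¹)*st18U a y) * st18S cH (st18W y)
        + st18U a y * (st18S (st18sh cH) (st18W y) * (-27*(8*y+1)*((4*y-1)⁻¹)^4)) := rfl
  rw [hfe]
  refine h.congr_deriv ?_
  rw [st18G2]
  simp only [Pi.mul_apply]
  ring

end St18

/-- The cubic transformation:
    ₂F₁(a,(1-a)/3;(4a+5)/6;x) = (1-4x)^{-a} ₂F₁(a/3,(a+1)/3;(4a+5)/6;27x/(4x-1)³)
    for |x| sufficiently small. -/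
theorem stmt_18 (a : ℂ) (hC : ∀ n : ℕ, (4 * a + 5) / 6 ≠ -(n : ℂ)) :
    ∃ ε > (0 : ℝ), ∀ x : ℂ, ‖x‖ < ε →
      hyp a ((1 - a) / 3) ((4 * a + 5) / 6) x =
        (1 - 4 * x) ^ (-a) *
          hyp (a / 3) ((a + 1) / 3) ((4 * a + 5) / 6) (27 * x / (4 * x - 1) ^ 3) := by
  have hCn : ∀ n : ℕ, (n:ℂ) + (4*a+5)/6 ≠ 0 := fun n h => hC n (by linear_combination h)
  obtain ⟨R, hR1, hRb⟩ := st18_cf_bound (a/3) ((a+1)/3) hCn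
  have hR0 : (0:ℝ) < R := lt_of_lt_of_le one_pos hR1
  set cH : ℕ → ℂ := st18cf (a/3) ((a+1)/3) ((4*a+5)/6) with hcH
  have hRb1 : ∀ n, ‖cH n‖ ≤ 1 * R^n := fun n => by rw [one_mul]; exact hRb n
  -- ODE for the inner hypergeometric function
  have hODE_H : ∀ y : ℂ, ‖y‖ < (4*R)⁻¹ →
      y*(1-y)*st18S (st18sh (st18sh cH)) y
        + ((4*a+5)/6-((a/3)+((a+1)/3)+1)*y)*st18S (st18sh cH) y
        - (a/3)*((a+1)/3)*st18S cH y = 0 := by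
    intro y hy
    rw [st18_comb (a/3) ((a+1)/3) ((4*a+5)/6) zero_le_one hR1 hRb1 hy]
    have hz : ∀ n : ℕ, ((((n:ℂ)+1)*((n:ℂ)+(4*a+5)/6))*cH (n+1)
        - (((n:ℂ)+a/3)*((n:ℂ)+(a+1)/3))*cH n) * y^n = 0 := by
      intro n
      have h := st18_cf_rec (a/3) ((a+1)/3) hCn n
      linear_combination (y^n) * h
    exact (tsum_congr hz).trans tsum_zero
  -- derivative facts for the inner function
  have h2R : (1:ℝ) ≤ 2*R := by linarith
  have hbsh : ∀ n, ‖st18sh cH n‖ ≤ (1*(2*R)) * (2*R)^n :=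
    st18_sh_bound zero_le_one hR1 hRb1
  have hH1d : ∀ y : ℂ, ‖y‖ < (4*R)⁻¹ →
      HasDerivAt (st18S cH) (st18S (st18sh cH) y) y :=
    fun y hy => st18_hasDerivAt zero_le_one hR1 hRb1 hy
  have hH2d : ∀ y : ℂ, ‖y‖ < (4*(2*R))⁻¹ →
      HasDerivAt (st18S (st18sh cH)) (st18S (st18sh (st18sh cH)) y) y :=
    fun y hy => st18_hasDerivAt (by positivity) h2R hbsh hy
  have h8R4R : (4*(2*R))⁻¹ ≤ (4*R)⁻¹ := by
    apply inv_anti₀ (by positivity) (by linarith)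
  -- the small radius
  set δ : ℝ := min ((4*(2*R))⁻¹/216) (1/100) with hδdef
  have hδ0 : 0 < δ := lt_min (by positivity) (by norm_num)
  have hfacts : ∀ x : ℂ, ‖x‖ < δ →
      (4*x-1) ≠ 0 ∧ (1-4*x) ∈ Complex.slitPlane ∧ (1-4*x) ≠ 0 ∧
        ‖st18W x‖ < (4*(2*R))⁻¹ := by
    intro x hx
    have hx100 : ‖x‖ < 1/100 := lt_of_lt_of_le hx (min_le_right _ _)
    have hx216 : ‖x‖ < (4*(2*R))⁻¹/216 := lt_of_lt_of_le hx (min_le_left _ _)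
    have h4x : ‖(4:ℂ)*x‖ = 4*‖x‖ := by
      rw [norm_mul]
      norm_num
    have hnt : (1:ℝ)/2 ≤ ‖4*x-1‖ := by
      have h2 : ‖(1:ℂ)‖ - ‖(4:ℂ)*x‖ ≤ ‖1-(4:ℂ)*x‖ := norm_sub_norm_le 1 ((4:ℂ)*x)
      rw [norm_one, h4x] at h2
      have h3 : ‖(1:ℂ)-4*x‖ = ‖4*x-1‖ := by rw [norm_sub_rev]
      rw [h3] at h2
      linarith
    have ht : (4*x-1) ≠ 0 := by
      intro h
      rw [h, norm_zero] at hnt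
      linarith
    have h14 : (1-4*x) ≠ 0 := by
      intro h
      apply ht
      linear_combination -h
    have hslit : (1-4*x) ∈ Complex.slitPlane := by
      rw [Complex.mem_slitPlane_iff]
      left
      have hre : x.re ≤ ‖x‖ := by
        calc x.re ≤ |x.re| := le_abs_self _
          _ ≤ ‖x‖ := Complex.abs_re_le_norm x
      have : (1-4*x).re = 1 - 4*x.re := by simp
      rw [this]
      linarith
    refine ⟨ht, hslit, h14, ?_⟩
    have hW : ‖st18W x‖ = 27*‖x‖/‖4*x-1‖^3 := by
      rw [st18W, norm_div, norm_pow, norm_mul]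
      norm_num
    rw [hW]
    have hd : 27*‖x‖/‖4*x-1‖^3 ≤ 27*‖x‖/(1/2)^3 := by
      apply div_le_div_of_nonneg_left (by positivity) (by norm_num)
      exact pow_le_pow_left₀ (by norm_num) hnt 3
    have : 27*‖x‖/(1/2)^3 = 216*‖x‖ := by
      rw [div_eq_iff (by norm_num : ((1:ℝ)/2)^3 ≠ 0)]
      ring_nf
    rw [this] at hd
    calc 27*‖x‖/‖4*x-1‖^3 ≤ 216*‖x‖ := hd
      _ < 216*((4*(2*R))⁻¹/216) := by linarith
      _ = (4*(2*R))⁻¹ := by ring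
  -- derivatives of G
  have hGder : ∀ x : ℂ, ‖x‖ < δ → HasDerivAt (st18G a cH) (st18G1 a cH x) x := by
    intro x hx
    obtain ⟨ht, hs, h14, hWx⟩ := hfacts x hx
    exact st18_G_deriv a cH ht hs h14 (hH1d _ (lt_of_lt_of_le hWx h8R4R))
  have hG1der : ∀ x : ℂ, ‖x‖ < δ → HasDerivAt (st18G1 a cH) (st18G2 a cH x) x := by
    intro x hx
    obtain ⟨ht, hs, h14, hWx⟩ := hfacts x hx
    exact st18_G1_deriv a cH ht hs h14 (hH1d _ (lt_of_lt_of_le hWx h8R4R)) (hH2d _ hWx)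
  -- the ODE for G
  have hODE_G : ∀ x : ℂ, ‖x‖ < δ → x ≠ 0 →
      x*(1-x)*st18G2 a cH x + ((4*a+5)/6-(a+(1-a)/3+1)*x)*st18G1 a cH x
        - a*((1-a)/3)*st18G a cH x = 0 := by
    intro x hx hx0
    obtain ⟨ht, hs, h14, hWx⟩ := hfacts x hx
    have hrel : (4*x-1)*(4*x-1)⁻¹ = 1 := mul_inv_cancel₀ ht
    have hO := hODE_H (st18W x) (lt_of_lt_of_le hWx h8R4R)
    rw [st18G2, st18G1, st18G]
    set h0v := st18S cH (st18W x) with hh0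
    set h1v := st18S (st18sh cH) (st18W x) with hh1
    set h2v := st18S (st18sh (st18sh cH)) (st18W x) with hh2
    set Ux := st18U a x with hUx
    have hWs : st18W x = 27*x*((4*x-1)⁻¹)^3 := by
      rw [st18W, div_eq_mul_inv, inv_pow]
    rw [hWs] at hO
    set sx : ℂ := (4*x-1)⁻¹ with hsx
    linear_combination ((-27 : ℂ)*Ux*sx^2)*hO + ((-45/2 : ℂ)*sx^2*Ux*h1v + (45/2 : ℂ)*sx^3*Ux*h1v + (1/3 : ℂ)*a*Ux*h0v + (3 : ℂ)*a*sx*Ux*h0v + (-18 : ℂ)*a*sx^2*Ux*h1v + (18 : ℂ)*a*sx^3*Ux*h1v + (-1/3 : ℂ)*a^2*Ux*h0v + (3 : ℂ)*a^2*sx*Ux*h0v + (-90 : ℂ)*x*sx^3*Ux*h1v + (324 : ℂ)*x*sx^4*Ux*h1v + (-729 : ℂ)*x*sx^5*Ux*h2v + (729 : ℂ)*x*sx^6*Ux*h2v + (-729 : ℂ)*x*sx^7*Ux*h2v + (-4 : ℂ)*x*a*sx*Ux*h0v + (-72 : ℂ)*x*a*sx^3*Ux*h1v + (270 : ℂ)*x*a*sx^4*Ux*h1v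 + (-4 : ℂ)*x*a^2*sx*Ux*h0v + (-648 : ℂ)*x^2*sx^4*Ux*h1v + (-2916 : ℂ)*x^2*sx^6*Ux*h2v + (5832 : ℂ)*x^2*sx^7*Ux*h2v + (-432 : ℂ)*x^2*a*sx^4*Ux*h1v + (-11664 : ℂ)*x^3*sx^7*Ux*h2v)*hrel
  -- analytic continuation machinery
  have hGdiff : DifferentiableOn ℂ (st18G a cH) (Metric.ball 0 δ) := by
    intro y hy
    rw [Metric.mem_ball, dist_zero_right] at hy
    exact ((hGder y hy).differentiableAt).differentiableWithinAt
  have hA : AnalyticAt ℂ (st18G a cH) 0 :=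
    hGdiff.analyticAt (Metric.isOpen_ball.mem_nhds (by simpa [Metric.mem_ball] using hδ0))
  obtain ⟨q, hq⟩ := hA
  have hq' := hasFPowerSeriesAt_iff.mp hq
  rw [Metric.eventually_nhds_iff] at hq'
  obtain ⟨r', hr'0, hr'⟩ := hq'
  set d : ℕ → ℂ := fun n => q.coeff n with hdd
  have hrep : ∀ z : ℂ, ‖z‖ < r' → st18G a cH z = st18S d z := by
    intro z hz
    have h := hr' (show dist z 0 < r' by rwa [dist_zero_right])
    rw [zero_add] at h
    rw [st18S, ← h.tsum_eq]
    apply tsum_congr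
    intro n
    rw [smul_eq_mul]
    ring
  have hrad : 0 < q.radius := hq.radius_pos
  obtain ⟨r0, hr00, hr0r⟩ := ENNReal.lt_iff_exists_nnreal_btwn.mp hrad
  have hr0pos : 0 < (r0:ℝ) := by exact_mod_cast hr00
  obtain ⟨Cq, hCq0, hCqb⟩ := q.norm_mul_pow_le_of_lt_radius hr0r
  set Rd : ℝ := max (r0:ℝ)⁻¹ 1 with hRdd
  have hRd1 : (1:ℝ) ≤ Rd := le_max_right _ _
  have hRd0 : (0:ℝ) < Rd := lt_of_lt_of_le one_pos hRd1
  have hCq0' : (0:ℝ) ≤ Cq := le_of_lt hCq0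
  have hdb : ∀ n, ‖d n‖ ≤ Cq * Rd^n := by
    intro n
    have h1 : ‖d n‖ = ‖q n‖ := (q.norm_apply_eq_norm_coef).symm
    have h2 : ‖q n‖ * (r0:ℝ)^n ≤ Cq := hCqb n
    have h3 : ‖q n‖ ≤ Cq * ((r0:ℝ)⁻¹)^n := by
      rw [← le_div_iff₀ (by positivity)] at h2
      rw [div_eq_mul_inv, ← inv_pow] at h2
      exact h2
    have h4 : ((r0:ℝ)⁻¹)^n ≤ Rd^n := pow_le_pow_left₀ (by positivity) (le_max_left _ _) n
    rw [h1]
    calc ‖q n‖ ≤ Cq * ((r0:ℝ)⁻¹)^n := h3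
      _ ≤ Cq * Rd^n := by apply mul_le_mul_of_nonneg_left h4 hCq0'
  have hd1 : ∀ y:ℂ, ‖y‖ < (4*Rd)⁻¹ →
      HasDerivAt (st18S d) (st18S (st18sh d) y) y :=
    fun y hy => st18_hasDerivAt hCq0' hRd1 hdb hy
  have hdbsh : ∀ n, ‖st18sh d n‖ ≤ (Cq*(2*Rd))*(2*Rd)^n := st18_sh_bound hCq0' hRd1 hdb
  have h2Rd : (1:ℝ) ≤ 2*Rd := by linarith
  have hd2 : ∀ y:ℂ, ‖y‖ < (4*(2*Rd))⁻¹ →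
      HasDerivAt (st18S (st18sh d)) (st18S (st18sh (st18sh d)) y) y :=
    fun y hy => st18_hasDerivAt (by positivity) h2Rd hdbsh hy
  have hdbsh2 : ∀ n, ‖st18sh (st18sh d) n‖ ≤ ((Cq*(2*Rd))*(2*(2*Rd)))*(2*(2*Rd))^n :=
    st18_sh_bound (by positivity) h2Rd hdbsh
  have h4Rd : (1:ℝ) ≤ 2*(2*Rd) := by linarith
  have hd3 : ∀ y:ℂ, ‖y‖ < (4*(2*(2*Rd)))⁻¹ →
      HasDerivAt (st18S (st18sh (st18sh d))) (st18S (st18sh (st18sh (st18sh d))) y) y :=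
    fun y hy => st18_hasDerivAt (by positivity) h4Rd hdbsh2 hy
  set δ₁ : ℝ := min (min r' δ) (4*(2*(2*Rd)))⁻¹ with hδ₁d
  have hδ₁0 : 0 < δ₁ := lt_min (lt_min hr'0 hδ0) (by positivity)
  have hδ₁r' : δ₁ ≤ r' := le_trans (min_le_left _ _) (min_le_left _ _)
  have hδ₁δ : δ₁ ≤ δ := le_trans (min_le_left _ _) (min_le_right _ _)
  have hδ₁Rd : δ₁ ≤ (4*Rd)⁻¹ := by
    refine le_trans (min_le_right _ _) ?_
    apply inv_anti₀ (by positivity) (by linarith)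
  have hδ₁Rd2 : δ₁ ≤ (4*(2*Rd))⁻¹ := by
    refine le_trans (min_le_right _ _) ?_
    apply inv_anti₀ (by positivity) (by linarith)
  have hδ₁Rd3 : δ₁ ≤ (4*(2*(2*Rd)))⁻¹ := min_le_right _ _
  have hEq : ∀ y:ℂ, ‖y‖ < δ₁ → st18G a cH y = st18S d y :=
    fun y hy => hrep y (lt_of_lt_of_le hy hδ₁r')
  have hev : ∀ x:ℂ, ‖x‖ < δ₁ → st18S d =ᶠ[nhds x] st18G a cH := by
    intro x hx
    apply Filter.eventually_of_mem (Metric.isOpen_ball.mem_nhds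
      (show x ∈ Metric.ball (0:ℂ) δ₁ by rwa [Metric.mem_ball, dist_zero_right]))
    intro y hy
    rw [Metric.mem_ball, dist_zero_right] at hy
    exact (hEq y hy).symm
  have hg1eq : ∀ x:ℂ, ‖x‖ < δ₁ → st18G1 a cH x = st18S (st18sh d) x := by
    intro x hx
    have hA1 : HasDerivAt (st18S d) (st18G1 a cH x) x :=
      (hGder x (lt_of_lt_of_le hx hδ₁δ)).congr_of_eventuallyEq (hev x hx)
    exact hA1.unique (hd1 x (lt_of_lt_of_le hx hδ₁Rd))
  have hev1 : ∀ x:ℂ, ‖x‖ < δ₁ → st18S (st18sh d) =ᶠ[nhds x] st18G1 a cH := by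
    intro x hx
    apply Filter.eventually_of_mem (Metric.isOpen_ball.mem_nhds
      (show x ∈ Metric.ball (0:ℂ) δ₁ by rwa [Metric.mem_ball, dist_zero_right]))
    intro y hy
    rw [Metric.mem_ball, dist_zero_right] at hy
    exact (hg1eq y hy).symm
  have hg2eq : ∀ x:ℂ, ‖x‖ < δ₁ → st18G2 a cH x = st18S (st18sh (st18sh d)) x := by
    intro x hx
    have hA1 : HasDerivAt (st18S (st18sh d)) (st18G2 a cH x) x :=
      (hG1der x (lt_of_lt_of_le hx hδ₁δ)).congr_of_eventuallyEq (hev1 x hx)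
    exact hA1.unique (hd2 x (lt_of_lt_of_le hx hδ₁Rd2))
  -- the "Psi" function vanishes on the small ball
  have hΨne : ∀ x:ℂ, ‖x‖ < δ₁ → x ≠ 0 →
      x*(1-x)*st18S (st18sh (st18sh d)) x
        + ((4*a+5)/6-(a+(1-a)/3+1)*x)*st18S (st18sh d) x
        - a*((1-a)/3)*st18S d x = 0 := by
    intro x hx hx0
    rw [← hg2eq x hx, ← hg1eq x hx, ← hEq x hx]
    exact hODE_G x (lt_of_lt_of_le hx hδ₁δ) hx0
  have hΨ : ∀ x:ℂ, ‖x‖ < δ₁ →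
      x*(1-x)*st18S (st18sh (st18sh d)) x
        + ((4*a+5)/6-(a+(1-a)/3+1)*x)*st18S (st18sh d) x
        - a*((1-a)/3)*st18S d x = 0 := by
    intro x hx
    by_cases hx0 : x = 0
    · subst hx0
      set Ψ : ℂ → ℂ := fun y => y*(1-y)*st18S (st18sh (st18sh d)) y
        + ((4*a+5)/6-(a+(1-a)/3+1)*y)*st18S (st18sh d) y
        - a*((1-a)/3)*st18S d y with hΨdef
      have hc0 : ContinuousAt (st18S d) 0 :=
        (hd1 0 (by simpa using (by positivity : (0:ℝ) < (4*Rd)⁻¹))).continuousAt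
      have hc1 : ContinuousAt (st18S (st18sh d)) 0 :=
        (hd2 0 (by simpa using (by positivity : (0:ℝ) < (4*(2*Rd))⁻¹))).continuousAt
      have hc2 : ContinuousAt (st18S (st18sh (st18sh d))) 0 :=
        (hd3 0 (by simpa using (by positivity : (0:ℝ) < (4*(2*(2*Rd)))⁻¹))).continuousAt
      have hcΨ : ContinuousAt Ψ 0 := by
        apply ContinuousAt.sub
        apply ContinuousAt.add
        · exact ((continuousAt_id.mul (continuousAt_const.sub continuousAt_id)).mul hc2)
        · exact ((continuousAt_const.sub (continuousAt_const.mul continuousAt_id)).mul hc1)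
        · exact continuousAt_const.mul hc0
      have hevΨ : ∀ᶠ y in nhdsWithin (0:ℂ) {(0:ℂ)}ᶜ, Ψ y = 0 := by
        filter_upwards [self_mem_nhdsWithin,
          mem_nhdsWithin_of_mem_nhds (Metric.ball_mem_nhds (0:ℂ) hδ₁0)] with y hy1 hy2
        rw [Metric.mem_ball, dist_zero_right] at hy2
        exact hΨne y hy2 hy1
      have ht1 : Filter.Tendsto Ψ (nhdsWithin (0:ℂ) {(0:ℂ)}ᶜ) (nhds (Ψ 0)) :=
        hcΨ.continuousWithinAt.tendsto
      have ht2 : Filter.Tendsto Ψ (nhdsWithin (0:ℂ) {(0:ℂ)}ᶜ) (nhds 0) :=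
        Filter.Tendsto.congr' (Filter.EventuallyEq.symm hevΨ) tendsto_const_nhds
      haveI : Filter.NeBot (nhdsWithin (0:ℂ) {(0:ℂ)}ᶜ) :=
        Module.punctured_nhds_neBot ℂ ℂ 0
      have hΨ0 : Ψ 0 = 0 := tendsto_nhds_unique ht1 ht2
      simpa [hΨdef] using hΨ0
    · exact hΨne x hx hx0
  -- extract coefficient recurrence
  set τ : ℕ → ℂ := fun n => (((n:ℂ)+1)*((n:ℂ)+(4*a+5)/6))*d (n+1)
      - (((n:ℂ)+a)*((n:ℂ)+(1-a)/3))*d n with hτd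
  have hτ0 : ∀ x:ℂ, ‖x‖ < δ₁ → st18S τ x = 0 := by
    intro x hx
    rw [st18S, hτd]
    rw [← st18_comb a ((1-a)/3) ((4*a+5)/6) hCq0' hRd1 hdb (lt_of_lt_of_le hx hδ₁Rd)]
    exact hΨ x hx
  have hτb : ∀ n, ‖τ n‖ ≤ ((Cq*Rd*(1+‖(4*a+5)/6‖)) + Cq*(1+‖a‖)*(1+‖(1-a)/3‖)) * (4*Rd)^n :=
    fun n => st18_tau_bound a ((1-a)/3) ((4*a+5)/6) hCq0' hRd1 hdb n
  have hτz : ∀ n, τ n = 0 := by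
    apply st18_vanish (by positivity) (by linarith) hτb hδ₁0 hτ0
  -- identify coefficients
  have hd0 : d 0 = 1 := by
    have h1 : st18G a cH 0 = st18S d 0 := hEq 0 (by simpa using hδ₁0)
    rw [st18S_zero] at h1
    rw [← h1, st18G]
    have hW0 : st18W 0 = 0 := by rw [st18W]; norm_num
    have hU0 : st18U a 0 = 1 := by
      rw [st18U, show (1:ℂ)-4*0 = 1 from by norm_num, Complex.one_cpow]
    rw [hW0, hU0, st18S_zero, hcH, st18_cf_zero, one_mul]
  have hdc : ∀ n, d n = st18cf a ((1-a)/3) ((4*a+5)/6) n := by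
    intro n
    induction n with
    | zero => rw [hd0, st18_cf_zero]
    | succ n ih =>
      have h1 : τ n = 0 := hτz n
      rw [hτd] at h1
      have h2 := st18_cf_rec a ((1-a)/3) hCn n
      have hne : (((n:ℂ)+1)*((n:ℂ)+(4*a+5)/6)) ≠ 0 := by
        apply mul_ne_zero _ (hCn n)
        have hh : ((n:ℂ)+1) = ((n+1 : ℕ) : ℂ) := by push_cast; ring
        rw [hh]
        exact Nat.cast_ne_zero.mpr (Nat.succ_ne_zero n)
      apply mul_right_cancel₀ hne
      linear_combination h1 + (((n:ℂ)+a)*((n:ℂ)+(1-a)/3))*ih - h2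
  -- conclusion
  refine ⟨δ₁, hδ₁0, fun x hx => ?_⟩
  have hx' : ‖x‖ < δ₁ := hx
  have hL : hyp a ((1 - a) / 3) ((4 * a + 5) / 6) x
      = st18S (st18cf a ((1-a)/3) ((4*a+5)/6)) x := rfl
  have hmid : st18S (st18cf a ((1-a)/3) ((4*a+5)/6)) x = st18S d x := by
    rw [st18S, st18S]
    apply tsum_congr
    intro n
    rw [hdc n]
  have hR' : st18G a cH x = (1 - 4 * x) ^ (-a) *
      hyp (a / 3) ((a + 1) / 3) ((4 * a + 5) / 6) (27 * x / (4 * x - 1) ^ 3) := rfl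
  rw [hL, hmid, ← hEq x hx', hR']
end
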